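/- Every formal power series map h(z) of ℂ reversing f_k(z) = z/(1−kz^k)^{1/k} has finite compositional order at most 2k. -/

import Mathlib

noncomputable section

/-- Composition of one-variable formal power series: `compP f g = f ∘ g` (substitute `g`
into `f`); this agrees with formal substitution when `g` has zero constant term. -/
def compP (f g : PowerSeries ℂ) : PowerSeries ℂ :=
  PowerSeries.mk fun n =>
    ∑ j ∈ Finset.range (n + 1), PowerSeries.coeff j f * PowerSeries.coeff n (g ^ j)

/-- Compositional iterate of a one-variable formal power series. -/
def iterP (g : PowerSeries ℂ) : ℕ → PowerSeries ℂ
  | 0 => PowerSeries.X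
  | m + 1 => compP g (iterP g m)


open PowerSeries

namespace Rev

abbrev R := PowerSeries ℂ

lemma coeff_compP (f g : R) (n : ℕ) :
    coeff n (compP f g) =
      ∑ j ∈ Finset.range (n + 1), coeff j f * coeff n (g ^ j) := by
  simp [compP]

-- zero constant coeff ⇒ high powers have no low coefficients
lemma coeff_pow_eq_zero {g : R} (hg : constantCoeff g = 0) {n j : ℕ} (h : n < j) :
    coeff n (g ^ j) = 0 := by
  obtain ⟨t, rfl⟩ := (PowerSeries.X_dvd_iff).2 hg
  rw [mul_pow, PowerSeries.coeff_X_pow_mul']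
  simp [Nat.not_le_of_lt h] 

lemma constantCoeff_compP (f g : R) : constantCoeff (compP f g) = constantCoeff f := by
  have := coeff_compP f g 0
  simpa using this

lemma compP_add (f₁ f₂ g : R) : compP (f₁ + f₂) g = compP f₁ g + compP f₂ g := by
  ext n
  simp [coeff_compP, add_mul, Finset.sum_add_distrib]

lemma compP_sub (f₁ f₂ g : R) : compP (f₁ - f₂) g = compP f₁ g - compP f₂ g := by
  ext n
  simp [coeff_compP, sub_mul, Finset.sum_sub_distrib]

lemma compP_C (a : ℂ) (g : R) : compP (PowerSeries.C a) g = PowerSeries.C a := by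
  ext n
  rw [coeff_compP]
  rw [Finset.sum_eq_single 0]
  · simp [PowerSeries.coeff_C]
  · intro j hj hj0
    simp [PowerSeries.coeff_C, hj0]
  · simp

lemma compP_one (g : R) : compP 1 g = 1 := by
  simpa using compP_C 1 g

lemma compP_X {g : R} (hg : constantCoeff g = 0) : compP PowerSeries.X g = g := by
  ext n
  rw [coeff_compP]
  rw [Finset.sum_eq_single 1]
  · cases n with
    | zero => simp [PowerSeries.coeff_X, hg]
    | succ m => simp [PowerSeries.coeff_X]
  · intro j hj hj1
    simp [PowerSeries.coeff_X, hj1]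
  · intro h
    have hn : n = 0 := by simpa using h
    simp [hn, PowerSeries.coeff_X, hg]

end Rev

namespace Rev
open Polynomial in
lemma coeff_aeval {g : R} (hg : constantCoeff g = 0) (p : Polynomial ℂ) (n : ℕ) :
    coeff n (aeval g p) = ∑ j ∈ Finset.range (n + 1), p.coeff j * coeff n (g ^ j) := by
  have hN : p.natDegree < max (p.natDegree + 1) (n + 1) := lt_of_lt_of_le (Nat.lt_succ_self _) (le_max_left _ _)
  rw [Polynomial.aeval_eq_sum_range' hN, map_sum]
  have : ∀ j ∈ Finset.range (max (p.natDegree + 1) (n + 1)),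
      coeff n (p.coeff j • g ^ j) = p.coeff j * coeff n (g ^ j) := by
    intro j _
    rw [PowerSeries.coeff_smul, smul_eq_mul]
  rw [Finset.sum_congr rfl this]
  symm
  apply Finset.sum_subset
  · exact Finset.range_subset_range.2 (le_max_right _ _)
  · intro j _ hj
    have : n < j := by
      simp only [Finset.mem_range, not_lt] at hj
      omega
    rw [coeff_pow_eq_zero hg this, mul_zero]

lemma coeff_compP_aeval {g : R} (hg : constantCoeff g = 0) (f : R) {n m : ℕ} (hnm : n < m) :
    coeff n (compP f g) = coeff n (Polynomial.aeval g (PowerSeries.trunc m f)) := by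
  rw [coeff_aeval hg, coeff_compP]
  apply Finset.sum_congr rfl
  intro j hj
  rw [PowerSeries.coeff_trunc]
  have : j < m := lt_of_lt_of_le (Finset.mem_range.1 hj) (by omega)
  rw [if_pos this]

lemma compP_mul {g : R} (hg : constantCoeff g = 0) (a b : R) :
    compP (a * b) g = compP a g * compP b g := by
  ext n
  rw [coeff_compP_aeval hg (a*b) (Nat.lt_succ_self n)]
  have key : coeff n (Polynomial.aeval g (PowerSeries.trunc (n+1) (a*b))) =
      coeff n (Polynomial.aeval g (PowerSeries.trunc (n+1) a * PowerSeries.trunc (n+1) b)) := by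
    rw [coeff_aeval hg, coeff_aeval hg]
    apply Finset.sum_congr rfl
    intro j hj
    have hjn : j < n + 1 := Finset.mem_range.1 hj
    congr 1
    rw [PowerSeries.coeff_trunc, if_pos hjn, Polynomial.coeff_mul, PowerSeries.coeff_mul]
    apply Finset.sum_congr rfl
    intro x hx
    have h1 : x.1 < n + 1 := by
      have := Finset.HasAntidiagonal.antidiagonal.fst_le hx; omega
    have h2 : x.2 < n + 1 := by
      have := Finset.HasAntidiagonal.antidiagonal.snd_le hx; omega
    rw [PowerSeries.coeff_trunc, if_pos h1, PowerSeries.coeff_trunc, if_pos h2]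
  rw [key, map_mul, PowerSeries.coeff_mul, PowerSeries.coeff_mul]
  apply Finset.sum_congr rfl
  intro x hx
  have h1 : x.1 < n + 1 := by
    have := Finset.HasAntidiagonal.antidiagonal.fst_le hx; omega
  have h2 : x.2 < n + 1 := by
    have := Finset.HasAntidiagonal.antidiagonal.snd_le hx; omega
  rw [coeff_compP_aeval hg a h1, coeff_compP_aeval hg b h2]

lemma compP_pow {g : R} (hg : constantCoeff g = 0) (a : R) (m : ℕ) :
    compP (a ^ m) g = (compP a g) ^ m := by
  induction m with
  | zero => simpa using compP_one g
  | succ i ih => rw [pow_succ, pow_succ, compP_mul hg, ih]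

end Rev

namespace Rev

lemma compP_assoc {b c : R} (hb : constantCoeff b = 0) (hc : constantCoeff c = 0) (a : R) :
    compP (compP a b) c = compP a (compP b c) := by
  ext n
  rw [coeff_compP, coeff_compP]
  have step1 : ∀ j ∈ Finset.range (n+1),
      coeff j (compP a b) * coeff n (c ^ j) =
      ∑ i ∈ Finset.range (n+1), coeff i a * coeff j (b ^ i) * coeff n (c ^ j) := by
    intro j hj
    rw [coeff_compP, Finset.sum_mul]
    apply Finset.sum_subset
    · exact Finset.range_subset_range.2 (by have := Finset.mem_range.1 hj; omega)
    · intro i _ hi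
      have hji : j < i := by simp only [Finset.mem_range, not_lt] at hi; omega
      rw [coeff_pow_eq_zero hb hji, mul_zero, zero_mul]
  rw [Finset.sum_congr rfl step1, Finset.sum_comm]
  apply Finset.sum_congr rfl
  intro i _
  have : coeff n ((compP b c) ^ i) = ∑ j ∈ Finset.range (n+1), coeff j (b ^ i) * coeff n (c ^ j) := by
    rw [← compP_pow hc, coeff_compP]
  rw [this, Finset.mul_sum]
  apply Finset.sum_congr rfl
  intro j _
  ring

lemma compP_inv {g u : R} (hg : constantCoeff g = 0) (hu : constantCoeff u ≠ 0) :
    compP u⁻¹ g = (compP u g)⁻¹ := by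
  have hcu : constantCoeff (compP u g) ≠ 0 := by rw [constantCoeff_compP]; exact hu
  rw [PowerSeries.eq_inv_iff_mul_eq_one hcu, ← compP_mul hg, PowerSeries.inv_mul_cancel u hu,
    compP_one]

end Rev

namespace Rev

lemma coeff_pow_split {m K : ℕ} (hm : 1 ≤ m) (hK : 1 ≤ K) (u : R) :
    coeff m (u ^ K) = coeff m (((u.trunc m : Polynomial ℂ) : R) ^ K)
      + K * (constantCoeff u) ^ (K - 1) * coeff m u := by
  set s : R := ((u.trunc m : Polynomial ℂ) : R) with hs
  set r : R := u - s with hrdef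
  have hr1 : ∀ b < m, coeff b r = 0 := by
    intro b hb
    rw [hrdef, map_sub, hs, PowerSeries.coeff_coe_trunc_of_lt hb, sub_self]
  have hrm : coeff m r = coeff m u := by
    rw [hrdef, map_sub, hs, Polynomial.coeff_coe, PowerSeries.coeff_trunc,
      if_neg (lt_irrefl m), sub_zero]
  have hs0 : constantCoeff s = constantCoeff u := by
    rw [← PowerSeries.coeff_zero_eq_constantCoeff_apply, hs,
      PowerSeries.coeff_coe_trunc_of_lt hm, PowerSeries.coeff_zero_eq_constantCoeff_apply]
  have hr2sq : ∀ b ≤ m, coeff b (r ^ 2) = 0 := by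
    intro b hb
    rw [pow_two, PowerSeries.coeff_mul]
    apply Finset.sum_eq_zero
    intro x hx
    have hxy := Finset.HasAntidiagonal.mem_antidiagonal.1 hx
    rcases lt_or_ge x.1 m with h | h
    · rw [hr1 x.1 h, zero_mul]
    · have : x.2 < m := by omega
      rw [hr1 x.2 this, mul_zero]
  have hr2 : ∀ e, 2 ≤ e → ∀ b ≤ m, coeff b (r ^ e) = 0 := by
    intro e he b hb
    have : r ^ e = r ^ 2 * r ^ (e - 2) := by rw [← pow_add]; congr 1; omega
    rw [this, PowerSeries.coeff_mul]
    apply Finset.sum_eq_zero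
    intro x hx
    have hxy := Finset.HasAntidiagonal.mem_antidiagonal.1 hx
    rw [hr2sq x.1 (by omega), zero_mul]
  have husr : u = s + r := by rw [hrdef]; ring
  rw [husr, add_pow, map_sum]
  have hsplit : ∀ i ∈ Finset.range (K + 1), i ∉ ({K - 1, K} : Finset ℕ) →
      coeff m (s ^ i * r ^ (K - i) * ((K.choose i : ℕ) : R)) = 0 := by
    intro i hiR hi
    simp only [Finset.mem_insert, Finset.mem_singleton] at hi
    have h2 : 2 ≤ K - i := by
      have := Finset.mem_range.1 hiR; omega
    have : ((K.choose i : ℕ) : R) = PowerSeries.C ((K.choose i : ℕ) : ℂ) := by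
      rw [map_natCast]
    rw [this, PowerSeries.coeff_mul_C, PowerSeries.coeff_mul]
    rw [Finset.sum_eq_zero, zero_mul]
    intro x hx
    have hxy := Finset.HasAntidiagonal.mem_antidiagonal.1 hx
    rw [hr2 (K - i) h2 x.2 (by omega), mul_zero]
  rw [← Finset.sum_subset (by intro x hx; simp at hx ⊢; omega) hsplit]
  have hne : (K - 1) ≠ K := by omega
  rw [Finset.sum_pair hne]
  have hterm2 : coeff m (s ^ K * r ^ (K - K) * ((K.choose K : ℕ) : R)) = coeff m (s ^ K) := by
    rw [Nat.sub_self, pow_zero, mul_one, Nat.choose_self]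
    simp
  have hKK1 : K - (K - 1) = 1 := by omega
  have hchoose : K.choose (K - 1) = K := by
    rw [Nat.choose_symm hK, Nat.choose_one_right]
  have hterm1 : coeff m (s ^ (K-1) * r ^ (K - (K-1)) * ((K.choose (K-1) : ℕ) : R)) =
      K * (constantCoeff u) ^ (K - 1) * coeff m u := by
    rw [hKK1, hchoose, pow_one]
    have : ((K : ℕ) : R) = PowerSeries.C ((K : ℕ) : ℂ) := by rw [map_natCast]
    rw [this, PowerSeries.coeff_mul_C, PowerSeries.coeff_mul]
    rw [Finset.sum_eq_single (0, m)]
    · rw [PowerSeries.coeff_zero_eq_constantCoeff_apply, map_pow, hs0, hrm]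
      ring
    · intro x hx hxne
      have hxy := Finset.HasAntidiagonal.mem_antidiagonal.1 hx
      have : x.2 < m := by
        rcases Nat.lt_or_ge x.2 m with h | h
        · exact h
        · exfalso; apply hxne
          have h1 : x.2 = m := by omega
          have h2 : x.1 = 0 := by omega
          exact Prod.ext h2 h1
      rw [hr1 x.2 this, mul_zero]
    · intro h
      exfalso; exact h (Finset.HasAntidiagonal.mem_antidiagonal.2 (by omega))
  rw [hterm1, hterm2, ← husr]
  ring

end Rev

namespace Rev

def Pk (k : ℕ) (u : R) : Prop := ∀ m : ℕ, ¬ (k ∣ m) → coeff m u = 0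

lemma Pk_one (k : ℕ) : Pk k 1 := by
  intro m hm
  have hm0 : m ≠ 0 := by rintro rfl; exact hm (dvd_zero k)
  simp [PowerSeries.coeff_one, hm0]

lemma Pk_C (k : ℕ) (a : ℂ) : Pk k (PowerSeries.C a) := by
  intro m hm
  have hm0 : m ≠ 0 := by rintro rfl; exact hm (dvd_zero k)
  simp [PowerSeries.coeff_C, hm0]

lemma Pk_mul {k : ℕ} {u v : R} (hu : Pk k u) (hv : Pk k v) : Pk k (u * v) := by
  intro m hm
  rw [PowerSeries.coeff_mul]
  apply Finset.sum_eq_zero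
  intro x hx
  have hxy := Finset.HasAntidiagonal.mem_antidiagonal.1 hx
  by_cases h1 : k ∣ x.1
  · have h2 : ¬ k ∣ x.2 := by
      intro h2; exact hm (by rw [← hxy]; exact Dvd.dvd.add h1 h2)
    rw [hv x.2 h2, mul_zero]
  · rw [hu x.1 h1, zero_mul]

lemma Pk_pow {k : ℕ} {u : R} (hu : Pk k u) (n : ℕ) : Pk k (u ^ n) := by
  induction n with
  | zero => simpa using Pk_one k
  | succ i ih => rw [pow_succ]; exact Pk_mul ih hu

lemma Pk_trunc {k : ℕ} {u : R} (m : ℕ)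
    (h : ∀ i < m, ¬ (k ∣ i) → coeff i u = 0) : Pk k ((u.trunc m : Polynomial ℂ) : R) := by
  intro i hi
  rw [Polynomial.coeff_coe, PowerSeries.coeff_trunc]
  split
  · exact h i ‹_› hi
  · rfl

lemma Pk_root {k : ℕ} (hk : 1 ≤ k) {u : R} (hu0 : constantCoeff u = 1)
    (huk : Pk k (u ^ k)) : Pk k u := by
  intro m
  induction m using Nat.strong_induction_on with
  | _ m ih =>
    intro hm
    have hm1 : 1 ≤ m := by
      rcases Nat.eq_zero_or_pos m with h | h
      · exact absurd (h ▸ dvd_zero k) (h ▸ hm)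
      · exact h
    have hsplit := coeff_pow_split hm1 hk u
    have hsPk : Pk k ((u.trunc m : Polynomial ℂ) : R) :=
      Pk_trunc m (fun i hi hki => ih i hi hki)
    rw [huk m hm, hu0, one_pow, mul_one, (Pk_pow hsPk k) m hm, zero_add] at hsplit
    have hkC : ((k : ℕ) : ℂ) ≠ 0 := Nat.cast_ne_zero.2 (by omega)
    exact (mul_eq_zero.mp hsplit.symm).resolve_left hkC

lemma Pk_inv {k : ℕ} {u : R} (hu0 : constantCoeff u = 1) (hu : Pk k u) : Pk k u⁻¹ := by
  intro m
  induction m using Nat.strong_induction_on with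
  | _ m ih =>
    intro hm
    have hm1 : 1 ≤ m := by
      rcases Nat.eq_zero_or_pos m with h | h
      · exact absurd (h ▸ dvd_zero k) (h ▸ hm)
      · exact h
    have h1 : u * u⁻¹ = 1 := PowerSeries.mul_inv_cancel u (by rw [hu0]; exact one_ne_zero)
    have h2 : coeff m (u * u⁻¹) = 0 := by
      rw [h1]
      simp [PowerSeries.coeff_one, Nat.one_le_iff_ne_zero.mp hm1]
    rw [PowerSeries.coeff_mul] at h2
    rw [Finset.sum_eq_single (0, m)] at h2
    · rw [PowerSeries.coeff_zero_eq_constantCoeff_apply, hu0, one_mul] at h2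
      exact h2
    · intro x hx hxne
      have hxy := Finset.HasAntidiagonal.mem_antidiagonal.1 hx
      by_cases h1' : k ∣ x.1
      · have hx1 : x.1 ≠ 0 := by
          rintro h0
          exact hxne (Prod.ext h0 (by omega))
        have hx2m : x.2 < m := by omega
        have h2' : ¬ k ∣ x.2 := fun hdvd => hm (by rw [← hxy]; exact h1'.add hdvd)
        rw [ih x.2 hx2m h2', mul_zero]
      · rw [hu x.1 h1', zero_mul]
    · intro h
      exact absurd (Finset.HasAntidiagonal.mem_antidiagonal.2 (by omega)) h

lemma const_of_pow_eq_one {K : ℕ} (hK : 1 ≤ K) {q : R}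
    (hq0 : constantCoeff q ≠ 0) (hqK : q ^ K = 1) :
    q = PowerSeries.C (constantCoeff q) := by
  have key : ∀ m, 1 ≤ m → coeff m q = 0 := by
    intro m
    induction m using Nat.strong_induction_on with
    | _ m ih =>
      intro hm1
      have hsC : ((q.trunc m : Polynomial ℂ) : R) = PowerSeries.C (constantCoeff q) := by
        ext i
        rw [Polynomial.coeff_coe, PowerSeries.coeff_trunc, PowerSeries.coeff_C]
        rcases Nat.eq_zero_or_pos i with rfl | hi
        · rw [if_pos (by omega), if_pos rfl, PowerSeries.coeff_zero_eq_constantCoeff_apply]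
        · rw [if_neg (by omega : ¬ i = 0)]
          split
          · exact ih i ‹_› hi
          · rfl
      have hsplit := coeff_pow_split hm1 hK q
      rw [hqK, hsC, ← map_pow, PowerSeries.coeff_C, if_neg (by omega)] at hsplit
      have : coeff m (1 : R) = 0 := by
        simp [PowerSeries.coeff_one, Nat.one_le_iff_ne_zero.mp hm1]
      rw [this, zero_add] at hsplit
      have hKC : ((K : ℕ) : ℂ) ≠ 0 := Nat.cast_ne_zero.2 (by omega)
      have hpow : (constantCoeff q) ^ (K - 1) ≠ 0 := pow_ne_zero _ hq0
      have := (mul_eq_zero.mp hsplit.symm).resolve_left (mul_ne_zero hKC hpow)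
      exact this
  ext m
  rcases Nat.eq_zero_or_pos m with rfl | hm
  · simp
  · rw [key m hm, PowerSeries.coeff_C, if_neg (by omega)]

end Rev

namespace Rev

section W
variable {k : ℕ} (hk : 1 ≤ k) {w : R}
  (hw0 : PowerSeries.constantCoeff w = 1)
  (hwk : w ^ k = 1 - PowerSeries.C (k : ℂ) * PowerSeries.X ^ k)

lemma Pk_V : Pk k (1 - PowerSeries.C (k : ℂ) * PowerSeries.X ^ k) := by
  intro m hm
  have hm0 : m ≠ 0 := by rintro rfl; exact hm (dvd_zero k)
  have hmk : m ≠ k := by rintro rfl; exact hm dvd_rfl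
  rw [map_sub, PowerSeries.coeff_one, if_neg hm0, PowerSeries.coeff_C_mul,
    PowerSeries.coeff_X_pow, if_neg hmk, mul_zero, zero_sub, neg_zero]

include hk hw0 hwk in
lemma Pk_w : Pk k w := by
  apply Pk_root hk hw0
  rw [hwk]
  exact Pk_V

include hw0 in
lemma w_unit : w * w⁻¹ = 1 :=
  PowerSeries.mul_inv_cancel w (by rw [hw0]; exact one_ne_zero)

include hw0 in
lemma winv0 : PowerSeries.constantCoeff w⁻¹ = 1 := by
  have := congrArg (PowerSeries.constantCoeff) (w_unit hw0)
  rw [map_mul, hw0, one_mul, map_one] at this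
  exact this

include hk hw0 hwk in
lemma coeff_k_w_pow (n : ℕ) : coeff k (w ^ n) = (n : ℂ) * coeff k w := by
  induction n with
  | zero =>
    simp [PowerSeries.coeff_one, Nat.one_le_iff_ne_zero.mp hk]
  | succ n ih =>
    rw [pow_succ, PowerSeries.coeff_mul, Finset.Nat.sum_antidiagonal_eq_sum_range_succ_mk]
    have hPkw : Pk k w := Pk_w hk hw0 hwk
    have hzero : ∀ a ∈ Finset.range (k + 1), a ∉ ({0, k} : Finset ℕ) →
        coeff a (w ^ n) * coeff (k - a) w = 0 := by
      intro a haR ha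
      simp only [Finset.mem_insert, Finset.mem_singleton] at ha
      push_neg at ha
      have haR' := Finset.mem_range.1 haR
      have : ¬ k ∣ a := by
        intro hd
        rcases Nat.eq_zero_or_pos a with rfl | hapos
        · exact ha.1 rfl
        · have := Nat.le_of_dvd hapos hd
          omega
      rw [Pk_pow hPkw n a this, zero_mul]
    rw [← Finset.sum_subset
      (by intro x hx; simp only [Finset.mem_insert, Finset.mem_singleton] at hx
          simp only [Finset.mem_range]; omega) hzero]
    rw [Finset.sum_pair (by omega : (0:ℕ) ≠ k)]
    rw [PowerSeries.coeff_zero_eq_constantCoeff_apply, map_pow, hw0, one_pow, one_mul,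
      Nat.sub_self, PowerSeries.coeff_zero_eq_constantCoeff_apply, hw0, mul_one, ih,
      Nat.sub_zero]
    push_cast
    ring

include hk hw0 hwk in
lemma coeff_k_w : coeff k w = -1 := by
  have h1 := coeff_k_w_pow hk hw0 hwk k
  rw [hwk, map_sub, PowerSeries.coeff_one, if_neg (by omega : k ≠ 0),
    PowerSeries.coeff_C_mul, PowerSeries.coeff_X_pow, if_pos rfl, mul_one, zero_sub] at h1
  have hkC : ((k : ℕ) : ℂ) ≠ 0 := Nat.cast_ne_zero.2 (by omega)
  have h2 : (k:ℂ) * coeff k w = (k:ℂ) * (-1) := by rw [← h1]; ring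
  exact mul_left_cancel₀ hkC h2

end W
end Rev

namespace Rev
section W2
variable {k : ℕ} (hk : 1 ≤ k) {w : R}
  (hw0 : PowerSeries.constantCoeff w = 1)
  (hwk : w ^ k = 1 - PowerSeries.C (k : ℂ) * PowerSeries.X ^ k)

include hk hw0 hwk in
lemma coeff_k_w_mul (n : ℕ) (Cs : R) :
    coeff k (w ^ n * Cs) = coeff k Cs - (n : ℂ) * coeff 0 Cs := by
  rw [PowerSeries.coeff_mul, Finset.Nat.sum_antidiagonal_eq_sum_range_succ_mk]
  have hPkw : Pk k w := Pk_w hk hw0 hwk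
  have hzero : ∀ a ∈ Finset.range (k + 1), a ∉ ({0, k} : Finset ℕ) →
      coeff a (w ^ n) * coeff (k - a) Cs = 0 := by
    intro a haR ha
    simp only [Finset.mem_insert, Finset.mem_singleton] at ha
    push_neg at ha
    have haR' := Finset.mem_range.1 haR
    have : ¬ k ∣ a := by
      intro hd
      rcases Nat.eq_zero_or_pos a with rfl | hapos
      · exact ha.1 rfl
      · have := Nat.le_of_dvd hapos hd
        omega
    rw [Pk_pow hPkw n a this, zero_mul]
  rw [← Finset.sum_subset
    (by intro x hx; simp only [Finset.mem_insert, Finset.mem_singleton] at hx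
        simp only [Finset.mem_range]; omega) hzero]
  rw [Finset.sum_pair (by omega : (0:ℕ) ≠ k)]
  rw [PowerSeries.coeff_zero_eq_constantCoeff_apply, map_pow, hw0, one_pow, one_mul,
    Nat.sub_self, Nat.sub_zero, coeff_k_w_pow hk hw0 hwk, coeff_k_w hk hw0 hwk,
    PowerSeries.coeff_zero_eq_constantCoeff_apply]
  ring

include hk hw0 hwk in
lemma coeff_k_compP_f (C' : R) :
    coeff k (compP C' (PowerSeries.X * w⁻¹)) = coeff k C' := by
  rw [coeff_compP]
  rw [Finset.sum_eq_single k]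
  · rw [mul_pow, PowerSeries.coeff_X_pow_mul', if_pos (le_refl k), Nat.sub_self,
      PowerSeries.coeff_zero_eq_constantCoeff_apply, map_pow, winv0 hw0, one_pow, mul_one]
  · intro j hj hjk
    rw [mul_pow, PowerSeries.coeff_X_pow_mul']
    have hjle : j ≤ k := by have := Finset.mem_range.1 hj; omega
    rw [if_pos hjle]
    rcases Nat.eq_zero_or_pos j with rfl | hjpos
    · rw [pow_zero, PowerSeries.coeff_one, if_neg (by omega : ¬ (k - 0) = 0), mul_zero]
    · have hnd : ¬ k ∣ (k - j) := by
        intro hd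
        have hlt : j < k := lt_of_le_of_ne hjle hjk
        rcases Nat.eq_zero_or_pos (k - j) with h0 | hpos
        · omega
        · have := Nat.le_of_dvd hpos hd
          omega
      have hPkinv : Pk k w⁻¹ := Pk_inv hw0 (Pk_w hk hw0 hwk)
      rw [Pk_pow hPkinv j (k - j) hnd, mul_zero]
  · intro hkn
    exact absurd (Finset.mem_range.2 (by omega)) hkn

end W2
end Rev


open Rev

/-- Every invertible formal power series h reversing f_k(z) = z/(1-kz^k)^{1/k}
(written X * w⁻¹ with w the k-th root of 1 - k X^k with constant term 1) has finite
compositional order at most 2k: indeed h^{∘(2k)} = id.  The reversal condition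
h⁻¹ ∘ f ∘ h = f⁻¹ is encoded equivalently as f ∘ h ∘ f = h. -/
theorem reverser_of_fk_has_finite_order (k : ℕ) (hk : 1 ≤ k) (w h : PowerSeries ℂ)
    (hw0 : PowerSeries.constantCoeff w = 1)
    (hwk : w ^ k = 1 - PowerSeries.C (k : ℂ) * PowerSeries.X ^ k)
    (hh0 : PowerSeries.constantCoeff h = 0)
    (hh1 : PowerSeries.coeff 1 h ≠ 0)
    (hrev : compP (compP (PowerSeries.X * w⁻¹) h) (PowerSeries.X * w⁻¹) = h) :
    iterP h (2 * k) = PowerSeries.X := by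
  have hk0 : k ≠ 0 := by omega
  set X : PowerSeries ℂ := PowerSeries.X with hXdef
  set Ck : PowerSeries ℂ := PowerSeries.C (k : ℂ) with hCk
  set f : PowerSeries ℂ := X * w⁻¹ with hf
  have hfc : PowerSeries.constantCoeff f = 0 := by
    rw [hf, map_mul, hXdef, PowerSeries.constantCoeff_X, zero_mul]
  have hw0' : PowerSeries.constantCoeff w ≠ 0 := by rw [hw0]; exact one_ne_zero
  have hwu : w * w⁻¹ = 1 := PowerSeries.mul_inv_cancel w hw0'
  have hwinv : ∀ n : ℕ, w ^ n * w⁻¹ ^ n = 1 := fun n => by rw [← mul_pow, hwu, one_pow]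
  have hwinv' : ∀ n : ℕ, w⁻¹ ^ n * w ^ n = 1 := fun n => by
    rw [mul_comm]; exact hwinv n
  have hXk0 : (X : PowerSeries ℂ) ^ k ≠ 0 := pow_ne_zero _ PowerSeries.X_ne_zero
  have hfk' : f ^ k = X ^ k * w⁻¹ ^ k := by rw [hf, mul_pow]
  have hfkV : f ^ k * (1 - Ck * X ^ k) = X ^ k := by
    rw [hfk', ← hwk, mul_assoc, hwinv' k, mul_one]
  -- h = X * g
  obtain ⟨g, hg⟩ : X ∣ h := PowerSeries.X_dvd_iff.2 hh0
  have hgc : PowerSeries.constantCoeff g ≠ 0 := by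
    intro hcon
    apply hh1
    rw [hg, ← zero_add 1, PowerSeries.coeff_succ_X_mul,
      PowerSeries.coeff_zero_eq_constantCoeff_apply, hcon]
  set A : PowerSeries ℂ := g ^ k with hA
  have hhk : h ^ k = X ^ k * A := by rw [hg, hA, mul_pow]
  have hA0 : PowerSeries.constantCoeff A ≠ 0 := by
    rw [hA, map_pow]; exact pow_ne_zero _ hgc
  have hAu : A * A⁻¹ = 1 := PowerSeries.mul_inv_cancel A hA0
  have hhk0 : PowerSeries.constantCoeff (h ^ k) = 0 := by
    rw [map_pow, hh0, zero_pow hk0]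
  -- the reversal equation, raised to the k-th power
  have h2 : compP (compP (f ^ k) h) f = h ^ k := by
    rw [compP_pow hh0 f k, compP_pow hfc, hrev]
  have hVinv : w⁻¹ ^ k = (1 - Ck * X ^ k)⁻¹ := by
    rw [PowerSeries.eq_inv_iff_mul_eq_one]
    · rw [← hwk, hwinv' k]
    · rw [map_sub, map_one, map_mul, hCk, PowerSeries.constantCoeff_C, map_pow, hXdef,
        PowerSeries.constantCoeff_X, zero_pow hk0, mul_zero, sub_zero]
      exact one_ne_zero
  have hVc : PowerSeries.constantCoeff (1 - Ck * X ^ k) ≠ 0 := by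
    rw [map_sub, map_one, map_mul, hCk, PowerSeries.constantCoeff_C, map_pow, hXdef,
      PowerSeries.constantCoeff_X, zero_pow hk0, mul_zero, sub_zero]
    exact one_ne_zero
  have hcompV : compP (1 - Ck * X ^ k) h = 1 - Ck * h ^ k := by
    rw [compP_sub, compP_one, compP_mul hh0, compP_C, hCk, compP_pow hh0, compP_X hh0]
  have hcompVc : PowerSeries.constantCoeff (1 - Ck * h ^ k) ≠ 0 := by
    rw [map_sub, map_one, map_mul, hCk, PowerSeries.constantCoeff_C, hhk0, mul_zero, sub_zero]
    exact one_ne_zero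
  have h4 : compP (f ^ k) h = h ^ k * (1 - Ck * h ^ k)⁻¹ := by
    rw [hfk', hVinv, compP_mul hh0, compP_pow hh0, compP_X hh0,
      compP_inv hh0 hVc, hcompV]
  set Y : PowerSeries ℂ := compP (h ^ k) f with hY
  have hYc : PowerSeries.constantCoeff Y = 0 := by
    rw [hY, constantCoeff_compP, hhk0]
  have hcompWf : compP (1 - Ck * h ^ k) f = 1 - Ck * Y := by
    rw [compP_sub, compP_one, compP_mul hfc, compP_C, hCk, hY]
  have hcompWfc : PowerSeries.constantCoeff (1 - Ck * Y) ≠ 0 := by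
    rw [map_sub, map_one, map_mul, hCk, PowerSeries.constantCoeff_C, hYc, mul_zero, sub_zero]
    exact one_ne_zero
  have h5 : Y * (1 - Ck * Y)⁻¹ = h ^ k := by
    rw [hY, ← hcompWf, ← compP_inv hfc hcompVc, ← compP_mul hfc, ← h4, h2]
  have hE2 : Y * (1 + Ck * h ^ k) = h ^ k := by
    have h6 : Y * (1 - Ck * Y)⁻¹ * (1 - Ck * Y) = h ^ k * (1 - Ck * Y) := by rw [h5]
    rw [mul_assoc, PowerSeries.inv_mul_cancel _ hcompWfc, mul_one] at h6
    linear_combination h6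
  -- Z := compP A f, derive E3 : Z * (1 + Ck * X^k * A) = A * (1 - Ck * X^k)
  set Z : PowerSeries ℂ := compP A f with hZ
  have hZ0 : PowerSeries.constantCoeff Z ≠ 0 := by
    rw [hZ, constantCoeff_compP]; exact hA0
  have hZu : Z * Z⁻¹ = 1 := PowerSeries.mul_inv_cancel Z hZ0
  have hYZ : Y = X ^ k * w⁻¹ ^ k * Z := by
    rw [hY, hhk, compP_mul hfc, compP_pow hfc, compP_X hfc, hfk', hZ]
  have hE2' : X ^ k * w⁻¹ ^ k * Z * (1 + Ck * (X ^ k * A)) = X ^ k * A := by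
    rw [← hYZ, ← hhk, hE2]
  have e1 : X ^ k * (Z * (1 + Ck * X ^ k * A)) = X ^ k * (A * (1 - Ck * X ^ k)) := by
    have q := hwinv' k
    linear_combination (w ^ k) * hE2' - (X ^ k * Z * (1 + Ck * X ^ k * A)) * q +
      (X ^ k * A) * hwk
  have hE3 : Z * (1 + Ck * X ^ k * A) = A * (1 - Ck * X ^ k) := mul_left_cancel₀ hXk0 e1
  -- B := A⁻¹ + 1 satisfies compP B f * (1 - Ck X^k) = B
  set B : PowerSeries ℂ := A⁻¹ + 1 with hB
  have k1 : Z * (A⁻¹ * (1 + Ck * X ^ k * A)) = 1 - Ck * X ^ k := by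
    linear_combination A⁻¹ * hE3 + (1 - Ck * X ^ k) * hAu
  have k2 : Z⁻¹ * (1 - Ck * X ^ k) = A⁻¹ * (1 + Ck * X ^ k * A) := by
    rw [← k1, ← mul_assoc, mul_comm Z⁻¹ Z, hZu, one_mul]
  have hcompB : compP B f = Z⁻¹ + 1 := by
    rw [hB, compP_add, compP_one, compP_inv hfc hA0, hZ]
  have hE4 : compP B f * (1 - Ck * X ^ k) = B := by
    rw [hcompB, hB]
    linear_combination k2 + Ck * X ^ k * hAu
  -- B' := B - C ν X^k satisfies the same equation and has zero k-th coefficient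
  set ν : ℂ := PowerSeries.coeff k B with hν
  set B' : PowerSeries ℂ := B - PowerSeries.C ν * X ^ k with hB'
  have hcompB' : compP B' f = compP B f - PowerSeries.C ν * f ^ k := by
    rw [hB', compP_sub, compP_mul hfc, compP_C, compP_pow hfc, compP_X hfc]
  have hE4' : compP B' f * (1 - Ck * X ^ k) = B' := by
    rw [hcompB', hB']
    linear_combination hE4 - PowerSeries.C ν * hfkV
  have hB'k : PowerSeries.coeff k B' = 0 := by
    rw [hB', map_sub, PowerSeries.coeff_C_mul, hXdef, PowerSeries.coeff_X_pow, if_pos rfl,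
      mul_one, hν, sub_self]
  -- Claim: B' = 0
  have hB'0 : B' = 0 := by
    by_contra hB'nz
    have hex : ∃ n, PowerSeries.coeff n B' ≠ 0 := by
      by_contra hcon
      push_neg at hcon
      exact hB'nz (PowerSeries.ext fun n => by rw [hcon n, map_zero])
    set n : ℕ := Nat.find hex with hn
    have hnne : PowerSeries.coeff n B' ≠ 0 := Nat.find_spec hex
    have hmin : ∀ i < n, PowerSeries.coeff i B' = 0 := fun i hi =>
      not_not.1 (Nat.find_min hex hi)
    obtain ⟨Cs, hCs⟩ : X ^ n ∣ B' := PowerSeries.X_pow_dvd_iff.2 hmin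
    have hc0 : PowerSeries.coeff 0 Cs = PowerSeries.coeff n B' := by
      have hcxp := PowerSeries.coeff_X_pow_mul Cs n 0
      rw [zero_add] at hcxp
      rw [hCs, hcxp]
    set Zc : PowerSeries ℂ := compP Cs f with hZc
    have hcompB'2 : compP B' f = X ^ k * w⁻¹ ^ k * 0 + X ^ n * w⁻¹ ^ n * Zc := by
      rw [hCs, compP_mul hfc, compP_pow hfc, compP_X hfc, hf, mul_pow, hZc]
      ring
    have e2 : X ^ n * (Zc * (1 - Ck * X ^ k)) = X ^ n * (w ^ n * Cs) := by
      have hE4'' := hE4'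
      rw [hcompB'2, hCs] at hE4''
      have q := hwinv' n
      linear_combination (w ^ n) * hE4'' - (X ^ n * Zc * (1 - Ck * X ^ k)) * q
    have hXn0 : (X : PowerSeries ℂ) ^ n ≠ 0 := pow_ne_zero _ PowerSeries.X_ne_zero
    have key : Zc * (1 - Ck * X ^ k) = w ^ n * Cs := mul_left_cancel₀ hXn0 e2
    -- compare coefficients of X^k on both sides
    have hLHS : PowerSeries.coeff k (Zc * (1 - Ck * X ^ k)) =
        PowerSeries.coeff k Cs - (k : ℂ) * PowerSeries.coeff 0 Cs := by
      have expand : Zc * (1 - Ck * X ^ k) = Zc - PowerSeries.C (k : ℂ) * (Zc * X ^ k) := by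
        rw [hCk]; ring
      rw [expand, map_sub, PowerSeries.coeff_C_mul, PowerSeries.coeff_mul_X_pow',
        if_pos (le_refl k), Nat.sub_self]
      have hZck : PowerSeries.coeff k Zc = PowerSeries.coeff k Cs := by
        rw [hZc, hf, hXdef]
        exact coeff_k_compP_f hk hw0 hwk Cs
      have hZc0 : PowerSeries.coeff 0 Zc = PowerSeries.coeff 0 Cs := by
        rw [PowerSeries.coeff_zero_eq_constantCoeff_apply, hZc, constantCoeff_compP,
          PowerSeries.coeff_zero_eq_constantCoeff_apply]
      rw [hZck, hZc0]
    have hRHS : PowerSeries.coeff k (w ^ n * Cs) =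
        PowerSeries.coeff k Cs - (n : ℂ) * PowerSeries.coeff 0 Cs := by
      exact coeff_k_w_mul hk hw0 hwk n Cs
    have hkn : (k : ℂ) * PowerSeries.coeff 0 Cs = (n : ℂ) * PowerSeries.coeff 0 Cs := by
      have e3 := congrArg (PowerSeries.coeff k) key
      rw [hLHS, hRHS] at e3
      linear_combination -e3
    have hc0ne : PowerSeries.coeff 0 Cs ≠ 0 := by rw [hc0]; exact hnne
    have : (k : ℂ) = (n : ℂ) := mul_right_cancel₀ hc0ne hkn
    have hkn' : k = n := Nat.cast_injective this
    exact hnne (hkn' ▸ hB'k)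
  have hBval : A⁻¹ = PowerSeries.C ν * X ^ k - 1 := by
    have : B = PowerSeries.C ν * X ^ k := by
      have := sub_eq_zero.mp (hB' ▸ hB'0)
      exact this
    rw [hB] at this
    linear_combination this
  have hXcomp : ∀ r : PowerSeries ℂ, PowerSeries.constantCoeff r = 0 → compP X r = r := by
    intro r hr
    rw [hXdef]
    exact compP_X hr
  -- A satisfies A * (C ν X^k - 1) = 1, hence C ν X^k A - 1 = A
  have hABU : A * (PowerSeries.C ν * X ^ k - 1) = 1 := by
    rw [← hBval]; exact hAu
  have hD : PowerSeries.C ν * X ^ k * A - 1 = A := by linear_combination hABU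
  -- p := h ∘ h satisfies p^k = X^k
  set p : PowerSeries ℂ := compP h h with hp
  set Z2 : PowerSeries ℂ := compP A h with hZ2
  have hZ2A : Z2 * (PowerSeries.C ν * (X ^ k * A) - 1) = 1 := by
    have e5 : compP (A * (PowerSeries.C ν * X ^ k - 1)) h = compP 1 h := by rw [hABU]
    rw [compP_mul hh0, compP_sub, compP_mul hh0, compP_C, compP_pow hh0] at e5
    rw [compP_one, compP_pow hh0 X k, hXcomp h hh0, hhk] at e5
    have hZ2g : Z2 = compP g h ^ k := by rw [hZ2, hA, compP_pow hh0]
    rw [← hZ2g] at e5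
    exact e5
  have hZ2A' : Z2 * A = 1 := by
    have : PowerSeries.C ν * (X ^ k * A) - 1 = A := by linear_combination hD
    rw [this] at hZ2A
    exact hZ2A
  have hpk : p ^ k = X ^ k := by
    rw [hp, ← compP_pow hh0 h k, hhk, compP_mul hh0, compP_pow hh0 X k, hXcomp h hh0,
      hhk, ← hZ2]
    linear_combination X ^ k * hZ2A'
  have hpc : PowerSeries.constantCoeff p = 0 := by
    rw [hp, constantCoeff_compP, hh0]
  obtain ⟨q, hq⟩ : X ∣ p := PowerSeries.X_dvd_iff.2 hpc
  have hqk : q ^ k = 1 := by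
    apply mul_left_cancel₀ hXk0
    rw [mul_one, ← mul_pow, ← hq, hpk]
  set c : ℂ := PowerSeries.constantCoeff q with hc
  have hck : c ^ k = 1 := by
    have := congrArg (PowerSeries.constantCoeff) hqk
    rw [map_pow, map_one] at this
    exact this
  have hcne : c ≠ 0 := by
    intro h0
    rw [h0, zero_pow hk0] at hck
    exact zero_ne_one hck
  have hqC : q = PowerSeries.C c := const_of_pow_eq_one hk hcne hqk
  have hpC : p = PowerSeries.C c * X := by rw [hq, hqC]; ring
  -- iterate
  have hconst : ∀ m, PowerSeries.constantCoeff (iterP h m) = 0 := by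
    intro m
    induction m with
    | zero => exact PowerSeries.constantCoeff_X
    | succ i ih =>
      show PowerSeries.constantCoeff (compP h (iterP h i)) = 0
      rw [constantCoeff_compP, hh0]
  have hiter : ∀ m, iterP h (2 * m) = PowerSeries.C (c ^ m) * PowerSeries.X := by
    intro m
    induction m with
    | zero =>
      show PowerSeries.X = _
      rw [pow_zero, map_one, one_mul]
    | succ m ih =>
      have e : 2 * (m + 1) = (2 * m + 1) + 1 := by ring
      rw [e]
      show compP h (iterP h (2 * m + 1)) = _
      have e' : iterP h (2 * m + 1) = compP h (iterP h (2 * m)) := rfl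
      rw [e', ← compP_assoc hh0 (hconst (2 * m)) h, ← hp, hpC,
        compP_mul (hconst (2 * m)), compP_C, hXcomp _ (hconst (2 * m)), ih]
      rw [← mul_assoc, ← map_mul, ← pow_succ']
  have := hiter k
  rw [hck, map_one, one_mul] at this
  exact this

end
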